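/- arXiv:1406.0578 — 2 statements merged into one kernel-verified Lean document; each statement's English description precedes it below -/
import Mathlib

section
/- Let X and Y be Hilbert spaces, T : X → Y a bounded linear operator with a least-squares projection approximation {(X_n, T_n)}. Then the LPA has kernel approximability if and only if it has bounded-weak convergence: whenever a sequence {y_n} ⊆ Y satisfies sup_n ‖T_n† y_n‖ < +∞ and y_n ⇀ y weakly, then y ∈ D(T†) and T_n† y_n ⇀ T† y weakly. -/
open Filter Topology Metric Submodule ContinuousLinearMap

/-- Orthogonal projection onto a subspace `K` (as an operator `H →L[ℝ] H`),
defined whenever `K` admits orthogonal projections (e.g. `K` closed). -/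
noncomputable def orthProj {H : Type*} [NormedAddCommGroup H] [InnerProductSpace ℝ H]
    (K : Submodule ℝ H) : H →L[ℝ] H :=
  open scoped Classical in
  if h : HasOrthogonalProjection K then
    haveI := h
    K.subtypeL.comp (orthogonalProjection K)
  else 0
section helpers
variable {H : Type*} [NormedAddCommGroup H] [InnerProductSpace ℝ H]

lemma orthProj_eq (K : Submodule ℝ H) [h : HasOrthogonalProjection K] (x : H) :
    orthProj K x = (orthogonalProjection K x : H) := by
  simp [orthProj, dif_pos h]

lemma orthProj_mem (K : Submodule ℝ H) [HasOrthogonalProjection K] (x : H) :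
    orthProj K x ∈ K := by rw [orthProj_eq]; exact (orthogonalProjection K x).2

lemma sub_orthProj_mem (K : Submodule ℝ H) [HasOrthogonalProjection K] (x : H) :
    x - orthProj K x ∈ Kᗮ := by rw [orthProj_eq]; exact K.sub_starProjection_mem_orthogonal x

lemma orthProj_eq_self {K : Submodule ℝ H} [HasOrthogonalProjection K] {x : H} (hx : x ∈ K) :
    orthProj K x = x := by rw [orthProj_eq]; exact K.starProjection_eq_self_iff.2 hx

lemma orthProj_eq_zero {K : Submodule ℝ H} [HasOrthogonalProjection K] {x : H} (hx : x ∈ Kᗮ) :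
    orthProj K x = 0 := by
  rw [orthProj_eq]
  simp [Submodule.orthogonalProjectionOnto_apply_of_mem_orthogonal hx]

lemma inner_orthProj (K : Submodule ℝ H) [HasOrthogonalProjection K] (u v : H) :
    (inner ℝ (orthProj K u) v : ℝ) = inner ℝ u (orthProj K v) := by
  rw [orthProj_eq K u, orthProj_eq K v]
  exact K.inner_starProjection_left_eq_right u v

lemma inner_sub_orthProj (K : Submodule ℝ H) [HasOrthogonalProjection K] (x w : H)
    (hw : w ∈ K) : (inner ℝ (x - orthProj K x) w : ℝ) = 0 := by
  rw [real_inner_comm]; exact sub_orthProj_mem K x w hw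

lemma inner_orthProj_self (K : Submodule ℝ H) [HasOrthogonalProjection K] (x : H) :
    (inner ℝ (orthProj K x) x : ℝ) = ‖orthProj K x‖ ^ 2 := by
  have h := inner_sub_orthProj K x (orthProj K x) (orthProj_mem K x)
  rw [inner_sub_left] at h
  have : (inner ℝ (orthProj K x) x : ℝ) = inner ℝ (orthProj K x) (orthProj K x) := by
    rw [real_inner_comm]
    linarith
  rw [this, real_inner_self_eq_norm_sq]

lemma norm_orthProj_le (K : Submodule ℝ H) [HasOrthogonalProjection K] (x : H) :
    ‖orthProj K x‖ ≤ ‖x‖ := by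
  have h := inner_orthProj_self K x
  have h2 := abs_real_inner_le_norm (orthProj K x) x
  nlinarith [norm_nonneg (orthProj K x), norm_nonneg x, abs_nonneg (inner ℝ (orthProj K x) x : ℝ), le_abs_self (inner ℝ (orthProj K x) x : ℝ)]

lemma norm_sub_orthProj_le (K : Submodule ℝ H) [HasOrthogonalProjection K] (x w : H)
    (hw : w ∈ K) : ‖x - orthProj K x‖ ≤ ‖x - w‖ := by
  have horth : (inner ℝ (x - orthProj K x) (orthProj K x - w) : ℝ) = 0 :=
    inner_sub_orthProj K x _ (K.sub_mem (orthProj_mem K x) hw)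
  have : ‖x - w‖ ^ 2 = ‖x - orthProj K x‖ ^ 2 + ‖orthProj K x - w‖ ^ 2 := by
    have : x - w = (x - orthProj K x) + (orthProj K x - w) := by abel
    rw [this, norm_add_sq_real, horth]; ring
  nlinarith [norm_nonneg (x - w), norm_nonneg (x - orthProj K x), sq_nonneg ‖orthProj K x - w‖]

lemma norm_sq_sub_orthProj (K : Submodule ℝ H) [HasOrthogonalProjection K] (x : H) :
    ‖x - orthProj K x‖ ^ 2 = ‖x‖ ^ 2 - ‖orthProj K x‖ ^ 2 := by
  have horth : (inner ℝ (x - orthProj K x) (orthProj K x) : ℝ) = 0 :=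
    inner_sub_orthProj K x _ (orthProj_mem K x)
  have hd : x = (x - orthProj K x) + orthProj K x := by abel
  have hx : ‖x‖ ^ 2 = ‖x - orthProj K x‖ ^ 2 + ‖orthProj K x‖ ^ 2 := by
    conv_lhs => rw [hd]
    rw [norm_add_sq_real, horth]; ring
  linarith
end helpers

set_option linter.unusedSectionVars false

section structural
variable {X Y : Type*} [NormedAddCommGroup X] [InnerProductSpace ℝ X] [CompleteSpace X]
  [NormedAddCommGroup Y] [InnerProductSpace ℝ Y] [CompleteSpace Y]

lemma hasProj_ker (S : X →L[ℝ] Y) : HasOrthogonalProjection (LinearMap.ker (S : X →ₗ[ℝ] Y)) := by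
  haveI := (ContinuousLinearMap.isClosed_ker S).completeSpace_coe
  infer_instance

lemma hasProj_closure (K : Submodule ℝ Y) : HasOrthogonalProjection K.topologicalClosure := by
  haveI := K.isClosed_topologicalClosure.completeSpace_coe
  infer_instance

/-- two elements of `(ker S)ᗮ` with the same image agree -/
lemma eq_of_orth_of_eq (S : X →L[ℝ] Y) {a b : X} (ha : a ∈ (LinearMap.ker (S : X →ₗ[ℝ] Y))ᗮ)
    (hb : b ∈ (LinearMap.ker (S : X →ₗ[ℝ] Y))ᗮ) (hab : S a = S b) : a = b := by
  have hk : a - b ∈ LinearMap.ker (S : X →ₗ[ℝ] Y) := by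
    simp [LinearMap.mem_ker, map_sub, hab]
  have ho : a - b ∈ (LinearMap.ker (S : X →ₗ[ℝ] Y))ᗮ := Submodule.sub_mem _ ha hb
  have h0 : (inner ℝ (a - b) (a - b) : ℝ) = 0 := ho (a - b) hk
  rw [inner_self_eq_zero] at h0
  exact sub_eq_zero.1 h0

variable (T : X →L[ℝ] Y) (Xn : ℕ → Submodule ℝ X) (Tn : ℕ → X →L[ℝ] Y)

lemma ker_inf_le_ker_Tn (hfin : ∀ n, FiniteDimensional ℝ (Xn n))
    (hTn : ∀ n, Tn n = T.comp (orthProj (Xn n))) (n : ℕ) :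
    (LinearMap.ker (T : X →ₗ[ℝ] Y) ⊓ Xn n : Submodule ℝ X) ≤ LinearMap.ker (Tn n : X →ₗ[ℝ] Y) := by
  haveI := hfin n
  rintro w ⟨hw1, hw2⟩
  rw [LinearMap.mem_ker, hTn n, ContinuousLinearMap.coe_coe, ContinuousLinearMap.comp_apply, orthProj_eq_self hw2]
  exact hw1

lemma orthXn_le_ker_Tn (hfin : ∀ n, FiniteDimensional ℝ (Xn n))
    (hTn : ∀ n, Tn n = T.comp (orthProj (Xn n))) (n : ℕ) :
    (Xn n)ᗮ ≤ LinearMap.ker (Tn n : X →ₗ[ℝ] Y) := by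
  haveI := hfin n
  intro w hw
  rw [LinearMap.mem_ker, hTn n, ContinuousLinearMap.coe_coe, ContinuousLinearMap.comp_apply, orthProj_eq_zero hw, map_zero]

lemma kerTn_orth_le_Xn (hfin : ∀ n, FiniteDimensional ℝ (Xn n))
    (hTn : ∀ n, Tn n = T.comp (orthProj (Xn n))) (n : ℕ) :
    (LinearMap.ker (Tn n : X →ₗ[ℝ] Y))ᗮ ≤ Xn n := by
  haveI := hfin n
  have h1 := Submodule.orthogonal_le (orthXn_le_ker_Tn T Xn Tn hfin hTn n)
  rwa [Submodule.orthogonal_orthogonal (Xn n)] at h1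

lemma Tn_apply_eq (hfin : ∀ n, FiniteDimensional ℝ (Xn n))
    (hTn : ∀ n, Tn n = T.comp (orthProj (Xn n))) (n : ℕ) {x : X} (hx : x ∈ Xn n) :
    Tn n x = T x := by
  haveI := hfin n
  rw [hTn n, ContinuousLinearMap.comp_apply, orthProj_eq_self hx]

end structural

section main
variable {X Y : Type*} [NormedAddCommGroup X] [InnerProductSpace ℝ X] [CompleteSpace X]
  [NormedAddCommGroup Y] [InnerProductSpace ℝ Y] [CompleteSpace Y]

set_option maxHeartbeats 2000000 in
/-- Kernel approximability is equivalent to bounded-weak convergence. -/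
theorem stmt1
    (T : X →L[ℝ] Y) (Xn : ℕ → Submodule ℝ X)
    (hfin : ∀ n, FiniteDimensional ℝ (Xn n))
    (hinf : ¬ FiniteDimensional ℝ X)
    (hproj : ∀ x : X, Tendsto (fun n => orthProj (Xn n) x) atTop (𝓝 x))
    (Tn : ℕ → X →L[ℝ] Y) (hTn : ∀ n, Tn n = T.comp (orthProj (Xn n)))
    (Tdag : Y → X)
    (hTdag : ∀ y ∈ (LinearMap.range (T : X →ₗ[ℝ] Y) ⊔ (LinearMap.range (T : X →ₗ[ℝ] Y))ᗮ : Submodule ℝ Y),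
      Tdag y ∈ (LinearMap.ker (T : X →ₗ[ℝ] Y))ᗮ ∧
        T (Tdag y) = orthProj (LinearMap.range (T : X →ₗ[ℝ] Y)).topologicalClosure y)
    (Tdagn : ℕ → Y → X)
    (hTdagn : ∀ n (y : Y), Tdagn n y ∈ (LinearMap.ker (Tn n : X →ₗ[ℝ] Y))ᗮ ∧
      (Tn n) (Tdagn n y) = orthProj ((Xn n).map (T : X →ₗ[ℝ] Y)) y) :
    (∀ x : X, x ∈ LinearMap.ker (T : X →ₗ[ℝ] Y) ↔
      Tendsto (fun n => Metric.infDist x ((LinearMap.ker (T : X →ₗ[ℝ] Y) ⊓ Xn n : Submodule ℝ X) : Set X))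
        atTop (𝓝 0))
    ↔
    (∀ (y : ℕ → Y) (ylim : Y),
      (∃ C : ℝ, ∀ n, ‖Tdagn n (y n)‖ ≤ C) →
      (∀ v : Y, Tendsto (fun n => (inner ℝ (y n) v : ℝ)) atTop (𝓝 (inner ℝ ylim v))) →
      ylim ∈ (LinearMap.range (T : X →ₗ[ℝ] Y) ⊔ (LinearMap.range (T : X →ₗ[ℝ] Y))ᗮ : Submodule ℝ Y) ∧
        ∀ v : X, Tendsto (fun n => (inner ℝ (Tdagn n (y n)) v : ℝ)) atTop
          (𝓝 (inner ℝ (Tdag ylim) v))) := by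
  constructor
  · intro hker y ylim hCex hweak
    obtain ⟨C, hC⟩ := hCex
    have hC0 : (0:ℝ) ≤ C := le_trans (norm_nonneg _) (hC 0)
    haveI hRP : HasOrthogonalProjection (LinearMap.range (T : X →ₗ[ℝ] Y)).topologicalClosure :=
      hasProj_closure _
    set R := (LinearMap.range (T : X →ₗ[ℝ] Y)).topologicalClosure with hR
    set xseq : ℕ → X := fun n => Tdagn n (y n) with hxseq
    have hmapP : ∀ n, HasOrthogonalProjection ((Xn n).map (T : X →ₗ[ℝ] Y)) := by
      intro n
      haveI := hfin n
      haveI : FiniteDimensional ℝ ((Xn n).map (T : X →ₗ[ℝ] Y)) :=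
        Module.Finite.map (Xn n) (T : X →ₗ[ℝ] Y)
      infer_instance
    have hmaple : ∀ n, (Xn n).map (T : X →ₗ[ℝ] Y) ≤ LinearMap.range (T : X →ₗ[ℝ] Y) := by
      intro n v hv
      obtain ⟨a, -, rfl⟩ := Submodule.mem_map.1 hv
      exact LinearMap.mem_range.2 ⟨a, rfl⟩
    -- y is bounded
    obtain ⟨B, hB⟩ : ∃ B : ℝ, ∀ n, ‖y n‖ ≤ B := by
      have hpt : ∀ v : Y, ∃ M, ∀ n, ‖(innerSL ℝ (y n)) v‖ ≤ M := by
        intro v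
        have hb := (hweak v).norm.bddAbove_range
        obtain ⟨M, hM⟩ := hb
        exact ⟨M, fun n => hM (Set.mem_range_self n)⟩
      obtain ⟨B, hB⟩ := banach_steinhaus hpt
      refine ⟨B, fun n => ?_⟩
      rw [← innerSL_apply_norm (𝕜 := ℝ) (y n)]
      exact hB n
    -- convergence of the projections onto T(Xn)
    have hQ : ∀ z : Y, Tendsto (fun n => orthProj ((Xn n).map (T : X →ₗ[ℝ] Y)) z) atTop
        (𝓝 (orthProj R z)) := by
      intro z
      have hz1 : z - orthProj R z ∈ (LinearMap.range (T : X →ₗ[ℝ] Y))ᗮ :=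
        (Submodule.mem_orthogonal _ _).2 fun u hu =>
          (Submodule.mem_orthogonal _ _).1 (sub_orthProj_mem R z) u
            (Submodule.le_topologicalClosure _ hu)
      have hz2 : ∀ n, orthProj ((Xn n).map (T : X →ₗ[ℝ] Y)) z
          = orthProj ((Xn n).map (T : X →ₗ[ℝ] Y)) (orthProj R z) := by
        intro n
        haveI := hmapP n
        have h0 : orthProj ((Xn n).map (T : X →ₗ[ℝ] Y)) (z - orthProj R z) = 0 :=
          orthProj_eq_zero ((Submodule.mem_orthogonal _ _).2 fun u hu =>
            (Submodule.mem_orthogonal _ _).1 hz1 u (hmaple n hu))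
        rw [map_sub, sub_eq_zero] at h0
        exact h0
      set w := orthProj R z with hw
      have hwR : w ∈ closure ((LinearMap.range (T : X →ₗ[ℝ] Y) : Submodule ℝ Y) : Set Y) := by
        rw [← Submodule.topologicalClosure_coe]
        exact orthProj_mem R z
      rw [Metric.tendsto_atTop]
      intro ε hε
      obtain ⟨w', hw', hdw⟩ := Metric.mem_closure_iff.1 hwR (ε/2) (by positivity)
      obtain ⟨u, rfl⟩ := LinearMap.mem_range.1 hw'
      have hTu : Tendsto (fun n => T (orthProj (Xn n) u)) atTop (𝓝 (T u)) :=
        (T.continuous.tendsto u).comp (hproj u)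
      rw [Metric.tendsto_atTop] at hTu
      obtain ⟨N, hN⟩ := hTu (ε/2) (by positivity)
      refine ⟨N, fun n hn => ?_⟩
      haveI := hmapP n
      haveI := hfin n
      have hmem : T (orthProj (Xn n) u) ∈ (Xn n).map (T : X →ₗ[ℝ] Y) :=
        Submodule.mem_map.2 ⟨orthProj (Xn n) u, orthProj_mem _ _, rfl⟩
      have hle : ‖w - orthProj ((Xn n).map (T : X →ₗ[ℝ] Y)) w‖ ≤ ‖w - T (orthProj (Xn n) u)‖ :=
        norm_sub_orthProj_le _ w _ hmem
      have hsplit : ‖w - T (orthProj (Xn n) u)‖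
          ≤ dist w (T u) + dist (T (orthProj (Xn n) u)) (T u) := by
        rw [dist_eq_norm, dist_eq_norm]
        calc ‖w - T (orthProj (Xn n) u)‖
            = ‖(w - T u) + (T u - T (orthProj (Xn n) u))‖ := by congr 1; abel
          _ ≤ ‖w - T u‖ + ‖T u - T (orthProj (Xn n) u)‖ := norm_add_le _ _
          _ = ‖w - T u‖ + ‖T (orthProj (Xn n) u) - T u‖ := by rw [norm_sub_rev (T u)]
      have : dist (orthProj ((Xn n).map (T : X →ₗ[ℝ] Y)) z) (orthProj R z) < ε := by
        rw [hz2 n, ← hw, dist_eq_norm, norm_sub_rev]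
        calc ‖w - orthProj ((Xn n).map (T : X →ₗ[ℝ] Y)) w‖
            ≤ dist w (T u) + dist (T (orthProj (Xn n) u)) (T u) := hle.trans hsplit
          _ < ε/2 + ε/2 := add_lt_add hdw (hN n hn)
          _ = ε := by ring
      exact this
    -- T applied to xseq
    have hTx : ∀ n, T (xseq n) = orthProj ((Xn n).map (T : X →ₗ[ℝ] Y)) (y n) := by
      intro n
      have h1 := (hTdagn n (y n)).1
      have hx_in : xseq n ∈ Xn n := kerTn_orth_le_Xn T Xn Tn hfin hTn n h1
      rw [← Tn_apply_eq T Xn Tn hfin hTn n hx_in]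
      exact (hTdagn n (y n)).2
    have hTweak : ∀ z : Y, Tendsto (fun n => (inner ℝ (T (xseq n)) z : ℝ)) atTop
        (𝓝 (inner ℝ (orthProj R ylim) z)) := by
      intro z
      have heq : ∀ n, (inner ℝ (T (xseq n)) z : ℝ)
          = inner ℝ (y n) (orthProj ((Xn n).map (T : X →ₗ[ℝ] Y)) z - orthProj R z)
            + inner ℝ (y n) (orthProj R z) := by
        intro n
        haveI := hmapP n
        rw [hTx n, inner_orthProj, ← inner_add_right]
        congr 1
        abel
      have t1 : Tendsto
          (fun n => (inner ℝ (y n) (orthProj ((Xn n).map (T : X →ₗ[ℝ] Y)) z - orthProj R z) : ℝ))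
          atTop (𝓝 0) := by
        have hq : Tendsto (fun n => orthProj ((Xn n).map (T : X →ₗ[ℝ] Y)) z - orthProj R z) atTop
            (𝓝 (orthProj R z - orthProj R z)) := (hQ z).sub tendsto_const_nhds
        rw [sub_self] at hq
        have hqn := hq.norm
        rw [norm_zero] at hqn
        have hg : Tendsto (fun n => B * ‖orthProj ((Xn n).map (T : X →ₗ[ℝ] Y)) z - orthProj R z‖)
            atTop (𝓝 0) := by
          have := hqn.const_mul B
          rwa [mul_zero] at this
        refine squeeze_zero_norm (fun n => ?_) hg
        calc ‖(inner ℝ (y n) (orthProj ((Xn n).map (T : X →ₗ[ℝ] Y)) z - orthProj R z) : ℝ)‖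
            ≤ ‖y n‖ * ‖orthProj ((Xn n).map (T : X →ₗ[ℝ] Y)) z - orthProj R z‖ := norm_inner_le_norm _ _
          _ ≤ B * ‖orthProj ((Xn n).map (T : X →ₗ[ℝ] Y)) z - orthProj R z‖ :=
              mul_le_mul_of_nonneg_right (hB n) (norm_nonneg _)
      have t2 := hweak (orthProj R z)
      have t12 := t1.add t2
      rw [zero_add] at t12
      rw [inner_orthProj R ylim z]
      exact Tendsto.congr (fun n => (heq n).symm) t12
    -- kernel directions
    have hker0 : ∀ v ∈ LinearMap.ker (T : X →ₗ[ℝ] Y),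
        Tendsto (fun n => (inner ℝ (xseq n) v : ℝ)) atTop (𝓝 0) := by
      intro v hv
      have hb : ∀ n, ‖(inner ℝ (xseq n) v : ℝ)‖
          ≤ C * Metric.infDist v ((LinearMap.ker (T : X →ₗ[ℝ] Y) ⊓ Xn n : Submodule ℝ X) : Set X) := by
        intro n
        refine le_of_forall_pos_le_add fun δ hδ => ?_
        have hlt : Metric.infDist v ((LinearMap.ker (T : X →ₗ[ℝ] Y) ⊓ Xn n : Submodule ℝ X) : Set X)
            < Metric.infDist v ((LinearMap.ker (T : X →ₗ[ℝ] Y) ⊓ Xn n : Submodule ℝ X) : Set X)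
              + δ/(C+1) := by
          have : (0:ℝ) < δ/(C+1) := by positivity
          linarith
        obtain ⟨w, hw, hdw⟩ := (Metric.infDist_lt_iff ⟨0, zero_mem _⟩).1 hlt
        have hworth : (inner ℝ (xseq n) w : ℝ) = 0 := by
          have hwk : w ∈ LinearMap.ker (Tn n : X →ₗ[ℝ] Y) := ker_inf_le_ker_Tn T Xn Tn hfin hTn n hw
          have h := (hTdagn n (y n)).1 w hwk
          rwa [real_inner_comm] at h
        calc ‖(inner ℝ (xseq n) v : ℝ)‖
            = ‖(inner ℝ (xseq n) (v - w) : ℝ)‖ := by rw [inner_sub_right, hworth, sub_zero]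
          _ ≤ ‖xseq n‖ * ‖v - w‖ := norm_inner_le_norm _ _
          _ ≤ C * ‖v - w‖ := mul_le_mul_of_nonneg_right (hC n) (norm_nonneg _)
          _ = C * dist v w := by rw [dist_eq_norm]
          _ ≤ C * (Metric.infDist v ((LinearMap.ker (T : X →ₗ[ℝ] Y) ⊓ Xn n : Submodule ℝ X) : Set X)
                + δ/(C+1)) := mul_le_mul_of_nonneg_left hdw.le hC0
          _ ≤ C * Metric.infDist v ((LinearMap.ker (T : X →ₗ[ℝ] Y) ⊓ Xn n : Submodule ℝ X) : Set X)
                + δ := by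
              have h1 : C * (δ/(C+1)) ≤ δ := by
                rw [mul_div_assoc']
                rw [div_le_iff₀ (by linarith : (0:ℝ) < C + 1)]
                nlinarith
              nlinarith [Metric.infDist_nonneg
                (x := v) (s := ((LinearMap.ker (T : X →ₗ[ℝ] Y) ⊓ Xn n : Submodule ℝ X) : Set X))]
      have hd := (hker v).1 hv
      have hg : Tendsto
          (fun n => C * Metric.infDist v ((LinearMap.ker (T : X →ₗ[ℝ] Y) ⊓ Xn n : Submodule ℝ X) : Set X))
          atTop (𝓝 0) := by
        have := hd.const_mul C
        rwa [mul_zero] at this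
      exact squeeze_zero_norm hb hg
    -- adjoint directions
    set A := ContinuousLinearMap.adjoint T with hA
    have hadj : ∀ z : Y, Tendsto (fun n => (inner ℝ (xseq n) (A z) : ℝ)) atTop
        (𝓝 (inner ℝ (orthProj R ylim) z)) := by
      intro z
      refine (hTweak z).congr fun n => ?_
      rw [ContinuousLinearMap.adjoint_inner_right]
    -- density of ker T ⊔ range A
    set D := (LinearMap.ker (T : X →ₗ[ℝ] Y) ⊔ LinearMap.range (A : Y →ₗ[ℝ] X) : Submodule ℝ X) with hD
    have hdense : ∀ v : X, v ∈ closure (D : Set X) := by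
      have hbot : Dᗮ = ⊥ := by
        rw [Submodule.eq_bot_iff]
        intro u hu
        have hu1 : u ∈ (LinearMap.ker (T : X →ₗ[ℝ] Y))ᗮ := Submodule.orthogonal_le le_sup_left hu
        have hu2 : ∀ z : Y, (inner ℝ (A z) u : ℝ) = 0 := fun z =>
          hu (A z) (le_sup_right (α := Submodule ℝ X) (LinearMap.mem_range.2 ⟨z, rfl⟩))
        have hTu : T u = 0 := by
          have h := hu2 (T u)
          rw [ContinuousLinearMap.adjoint_inner_left] at h
          exact inner_self_eq_zero.1 h
        have h := hu1 u (LinearMap.mem_ker.2 hTu)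
        exact inner_self_eq_zero.1 h
      have htop : D.topologicalClosure = ⊤ := Submodule.topologicalClosure_eq_top_iff.2 hbot
      intro v
      rw [← Submodule.topologicalClosure_coe, htop]
      exact Submodule.mem_top
    -- limits on the dense subspace
    have hDlim : ∀ u ∈ D, ∃ L : ℝ, Tendsto (fun n => (inner ℝ (xseq n) u : ℝ)) atTop (𝓝 L) := by
      intro u hu
      obtain ⟨a, ha, b, hb, rfl⟩ := Submodule.mem_sup.1 hu
      obtain ⟨z, rfl⟩ := LinearMap.mem_range.1 hb
      refine ⟨0 + inner ℝ (orthProj R ylim) z, ?_⟩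
      have h := (hker0 a ha).add (hadj z)
      exact h.congr fun n => (inner_add_right _ _ _).symm
    -- convergence everywhere
    have hCauchy : ∀ v : X, ∃ L : ℝ, Tendsto (fun n => (inner ℝ (xseq n) v : ℝ)) atTop (𝓝 L) := by
      intro v
      have hc : CauchySeq (fun n => (inner ℝ (xseq n) v : ℝ)) := by
        rw [Metric.cauchySeq_iff]
        intro ε hε
        obtain ⟨u, hu, hdu⟩ := Metric.mem_closure_iff.1 (hdense v) (ε/(4*(C+1)))
          (by positivity)
        obtain ⟨L, hL⟩ := hDlim u hu
        have hcau := hL.cauchySeq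
        rw [Metric.cauchySeq_iff] at hcau
        obtain ⟨N, hN⟩ := hcau (ε/2) (by positivity)
        refine ⟨N, fun m hm n hn => ?_⟩
        have key : ∀ k, |(inner ℝ (xseq k) v : ℝ) - inner ℝ (xseq k) u| ≤ ε/4 := by
          intro k
          rw [← inner_sub_right]
          calc |(inner ℝ (xseq k) (v - u) : ℝ)|
              ≤ ‖xseq k‖ * ‖v - u‖ := abs_real_inner_le_norm _ _
            _ ≤ C * (ε/(4*(C+1))) := by
                refine mul_le_mul (hC k) ?_ (norm_nonneg _) hC0
                rw [← dist_eq_norm]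
                exact hdu.le
            _ ≤ ε/4 := by
                rw [mul_div_assoc']
                rw [div_le_div_iff₀ (by positivity) (by norm_num)]
                nlinarith
        have h1 := key m
        have h2 := key n
        have h3 := hN m hm n hn
        rw [Real.dist_eq] at h3 ⊢
        have hsplit : (inner ℝ (xseq m) v : ℝ) - inner ℝ (xseq n) v
            = ((inner ℝ (xseq m) v : ℝ) - inner ℝ (xseq m) u)
              - ((inner ℝ (xseq n) v : ℝ) - inner ℝ (xseq n) u)
              + ((inner ℝ (xseq m) u : ℝ) - inner ℝ (xseq n) u) := by ring
        rw [hsplit]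
        calc |((inner ℝ (xseq m) v : ℝ) - inner ℝ (xseq m) u)
              - ((inner ℝ (xseq n) v : ℝ) - inner ℝ (xseq n) u)
              + ((inner ℝ (xseq m) u : ℝ) - inner ℝ (xseq n) u)|
            ≤ |((inner ℝ (xseq m) v : ℝ) - inner ℝ (xseq m) u)
              - ((inner ℝ (xseq n) v : ℝ) - inner ℝ (xseq n) u)|
              + |(inner ℝ (xseq m) u : ℝ) - inner ℝ (xseq n) u| := abs_add_le _ _
          _ ≤ |(inner ℝ (xseq m) v : ℝ) - inner ℝ (xseq m) u|
              + |(inner ℝ (xseq n) v : ℝ) - inner ℝ (xseq n) u|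
              + |(inner ℝ (xseq m) u : ℝ) - inner ℝ (xseq n) u| := by
                have := abs_sub ((inner ℝ (xseq m) v : ℝ) - inner ℝ (xseq m) u)
                  ((inner ℝ (xseq n) v : ℝ) - inner ℝ (xseq n) u)
                linarith
          _ < ε := by linarith
      exact cauchySeq_tendsto_of_complete hc
    choose L hL using hCauchy
    -- build the limit functional
    have hLadd : ∀ a b : X, L (a + b) = L a + L b := fun a b =>
      tendsto_nhds_unique (hL (a + b))
        (((hL a).add (hL b)).congr fun n => (inner_add_right _ _ _).symm)
    have hLsmul : ∀ (c : ℝ) (a : X), L (c • a) = c * L a := fun c a =>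
      tendsto_nhds_unique (hL (c • a))
        (((hL a).const_mul c).congr fun n => by rw [real_inner_smul_right])
    have hLbound : ∀ v : X, ‖L v‖ ≤ C * ‖v‖ := by
      intro v
      refine le_of_tendsto (hL v).norm (Filter.Eventually.of_forall fun n => ?_)
      calc ‖(inner ℝ (xseq n) v : ℝ)‖ ≤ ‖xseq n‖ * ‖v‖ := norm_inner_le_norm _ _
        _ ≤ C * ‖v‖ := mul_le_mul_of_nonneg_right (hC n) (norm_nonneg _)
    set φ : X →L[ℝ] ℝ := LinearMap.mkContinuous
      { toFun := L, map_add' := hLadd, map_smul' := fun c a => by simpa using hLsmul c a }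
      C hLbound with hφ
    set x0 : X := (InnerProductSpace.toDual ℝ X).symm φ with hx0
    have hx0v : ∀ v : X, (inner ℝ x0 v : ℝ) = L v := fun v => by
      rw [hx0]
      exact InnerProductSpace.toDual_symm_apply
    -- properties of x0
    have hx0ker : x0 ∈ (LinearMap.ker (T : X →ₗ[ℝ] Y))ᗮ := by
      refine (Submodule.mem_orthogonal _ _).2 fun u hu => ?_
      rw [real_inner_comm, hx0v u]
      exact tendsto_nhds_unique (hL u) (hker0 u hu)
    have hTx0 : T x0 = orthProj R ylim := by
      refine ext_inner_right ℝ fun z => ?_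
      rw [← ContinuousLinearMap.adjoint_inner_right, hx0v]
      exact tendsto_nhds_unique (hL (A z)) (hadj z)
    have hmem : ylim ∈ (LinearMap.range (T : X →ₗ[ℝ] Y) ⊔ (LinearMap.range (T : X →ₗ[ℝ] Y))ᗮ : Submodule ℝ Y) := by
      refine Submodule.mem_sup.2
        ⟨orthProj R ylim, LinearMap.mem_range.2 ⟨x0, hTx0⟩, ylim - orthProj R ylim, ?_, by abel⟩
      exact (Submodule.mem_orthogonal _ _).2 fun u hu =>
        (Submodule.mem_orthogonal _ _).1 (sub_orthProj_mem R ylim) u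
          (Submodule.le_topologicalClosure _ hu)
    refine ⟨hmem, ?_⟩
    obtain ⟨hd1, hd2⟩ := hTdag ylim hmem
    have hx0dag : x0 = Tdag ylim := by
      refine eq_of_orth_of_eq T hx0ker hd1 ?_
      rw [hTx0, hd2]
    intro v
    rw [← hx0dag, hx0v v]
    exact hL v
  · intro hbw x
    haveI hker : ∀ n, HasOrthogonalProjection (LinearMap.ker (Tn n : X →ₗ[ℝ] Y)) :=
      fun n => hasProj_ker (Tn n)
    constructor
    · intro hx
      haveI hkerT : HasOrthogonalProjection (LinearMap.ker (T : X →ₗ[ℝ] Y)) := hasProj_ker T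
      set y : ℕ → Y := fun n => Tn n x with hy
      have hz : ∀ n, Tdagn n (y n) = x - orthProj (LinearMap.ker (Tn n : X →ₗ[ℝ] Y)) x := by
        intro n
        haveI := hker n
        haveI := hfin n
        haveI : FiniteDimensional ℝ ((Xn n).map (T : X →ₗ[ℝ] Y)) :=
          Module.Finite.map (Xn n) (T : X →ₗ[ℝ] Y)
        have h1 := hTdagn n (y n)
        refine eq_of_orth_of_eq (Tn n) h1.1 (sub_orthProj_mem _ x) ?_
        rw [h1.2, map_sub]
        have hk0 : Tn n (orthProj (LinearMap.ker (Tn n : X →ₗ[ℝ] Y)) x) = 0 :=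
          LinearMap.mem_ker.1 (orthProj_mem (LinearMap.ker (Tn n : X →ₗ[ℝ] Y)) x)
        rw [hk0, sub_zero]
        refine orthProj_eq_self ?_
        rw [hy]
        refine Submodule.mem_map.2 ⟨orthProj (Xn n) x, orthProj_mem _ _, ?_⟩
        show T ((orthProj (Xn n)) x) = Tn n x
        rw [hTn n]; rfl
      have hbound : ∀ n, ‖Tdagn n (y n)‖ ≤ ‖x‖ := by
        intro n
        haveI := hker n
        rw [hz n]
        have h := norm_sub_orthProj_le (LinearMap.ker (Tn n : X →ₗ[ℝ] Y)) x 0 (zero_mem _)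
        simpa using h
      have hy0 : Tendsto y atTop (𝓝 0) := by
        have h : Tendsto (fun n => T (orthProj (Xn n) x)) atTop (𝓝 (T x)) :=
          (T.continuous.tendsto x).comp (hproj x)
        rw [show T x = 0 from LinearMap.mem_ker.1 hx] at h
        refine h.congr fun n => ?_
        show T ((orthProj (Xn n)) x) = Tn n x
        rw [hTn n]; rfl
      have hweak : ∀ v : Y, Tendsto (fun n => (inner ℝ (y n) v : ℝ)) atTop
          (𝓝 (inner ℝ (0 : Y) v)) := fun v => hy0.inner tendsto_const_nhds
      obtain ⟨hmem0, hconv⟩ := hbw y 0 ⟨‖x‖, hbound⟩ hweak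
      have hTdag0 : Tdag 0 = (0 : X) := by
        obtain ⟨h1, h2⟩ := hTdag 0 (zero_mem _)
        rw [map_zero] at h2
        exact eq_of_orth_of_eq T h1 (zero_mem _) (by rw [h2, map_zero])
      have hconv0 : ∀ v : X, Tendsto (fun n => (inner ℝ (Tdagn n (y n)) v : ℝ)) atTop (𝓝 0) := by
        intro v
        have h := hconv v
        rwa [hTdag0, inner_zero_left] at h
      have hx2 : Tendsto (fun n => ‖x - orthProj (LinearMap.ker (Tn n : X →ₗ[ℝ] Y)) x‖ ^ 2) atTop (𝓝 0) := by
        refine (hconv0 x).congr fun n => ?_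
        haveI := hker n
        rw [hz n]
        set z := x - orthProj (LinearMap.ker (Tn n : X →ₗ[ℝ] Y)) x with hzdef
        have hxe : x = z + orthProj (LinearMap.ker (Tn n : X →ₗ[ℝ] Y)) x := by rw [hzdef]; abel
        calc (inner ℝ z x : ℝ)
            = inner ℝ z (z + orthProj (LinearMap.ker (Tn n : X →ₗ[ℝ] Y)) x) := by rw [← hxe]
          _ = inner ℝ z z + inner ℝ z (orthProj (LinearMap.ker (Tn n : X →ₗ[ℝ] Y)) x) := inner_add_right z _ _
          _ = ‖z‖ ^ 2 := by
              rw [real_inner_self_eq_norm_sq,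
                inner_sub_orthProj (LinearMap.ker (Tn n : X →ₗ[ℝ] Y)) x _ (orthProj_mem _ x), add_zero]
      have hnorm : Tendsto (fun n => ‖x - orthProj (LinearMap.ker (Tn n : X →ₗ[ℝ] Y)) x‖) atTop (𝓝 0) := by
        have h := hx2.sqrt
        rw [Real.sqrt_zero] at h
        exact h.congr fun n => Real.sqrt_sq (norm_nonneg _)
      have hXnconv : Tendsto (fun n => ‖x - orthProj (Xn n) x‖) atTop (𝓝 0) := by
        have h : Tendsto (fun n => x - orthProj (Xn n) x) atTop (𝓝 (x - x)) :=
          Tendsto.sub tendsto_const_nhds (hproj x)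
        rw [sub_self] at h
        have h2 := h.norm
        rwa [norm_zero] at h2
      have hup : ∀ n, Metric.infDist x ((LinearMap.ker (T : X →ₗ[ℝ] Y) ⊓ Xn n : Submodule ℝ X) : Set X)
          ≤ ‖x - orthProj (Xn n) x‖ + ‖x - orthProj (LinearMap.ker (Tn n : X →ₗ[ℝ] Y)) x‖ := by
        intro n
        haveI := hfin n
        haveI := hker n
        set u := orthProj (LinearMap.ker (Tn n : X →ₗ[ℝ] Y)) x with hu
        set w := orthProj (Xn n) u with hw
        have hwmem : w ∈ (LinearMap.ker (T : X →ₗ[ℝ] Y) ⊓ Xn n : Submodule ℝ X) := by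
          refine Submodule.mem_inf.2 ⟨?_, orthProj_mem _ _⟩
          have hu1 : Tn n u = 0 := LinearMap.mem_ker.1 (orthProj_mem _ x)
          rw [hTn n, ContinuousLinearMap.comp_apply] at hu1
          exact LinearMap.mem_ker.2 hu1
        have hid : Metric.infDist x ((LinearMap.ker (T : X →ₗ[ℝ] Y) ⊓ Xn n : Submodule ℝ X) : Set X)
            ≤ dist x w := Metric.infDist_le_dist_of_mem hwmem
        rw [dist_eq_norm] at hid
        refine hid.trans ?_
        have hsplit : x - w = (x - orthProj (Xn n) x) + orthProj (Xn n) (x - u) := by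
          rw [hw, map_sub]; abel
        rw [hsplit]
        refine (norm_add_le _ _).trans ?_
        exact add_le_add le_rfl (norm_orthProj_le _ _)
      have hsum := hXnconv.add hnorm
      rw [add_zero] at hsum
      exact squeeze_zero (fun n => Metric.infDist_nonneg) hup hsum
    · intro h
      have hne : ((LinearMap.ker (T : X →ₗ[ℝ] Y) : Submodule ℝ X) : Set X).Nonempty := ⟨0, zero_mem _⟩
      have hle : ∀ n, Metric.infDist x ((LinearMap.ker (T : X →ₗ[ℝ] Y) : Submodule ℝ X) : Set X)
          ≤ Metric.infDist x ((LinearMap.ker (T : X →ₗ[ℝ] Y) ⊓ Xn n : Submodule ℝ X) : Set X) :=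
        fun n => Metric.infDist_le_infDist_of_subset
          (fun z hz => (Submodule.mem_inf.1 hz).1) ⟨0, zero_mem _⟩
      have h0 : Metric.infDist x ((LinearMap.ker (T : X →ₗ[ℝ] Y) : Submodule ℝ X) : Set X) = 0 :=
        le_antisymm (ge_of_tendsto h (Filter.Eventually.of_forall hle)) Metric.infDist_nonneg
      have hcl := (Metric.mem_closure_iff_infDist_zero hne).2 h0
      rwa [(ContinuousLinearMap.isClosed_ker T).closure_eq] at hcl

end main
end

section
/- Let X and Y be Hilbert spaces, T : X → Y a bounded linear operator with a least-squares projection approximation {(X_n, T_n)}. Then the graphs of T_n converge to the graph of T in the product Hilbert space X × Y: s-lim_{n→∞} G(T_n) = w-lim̃_{n→∞} G(T_n) = G(T), where G(S) := {(x, Sx) : x ∈ X}. -/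
open Filter Topology Metric Submodule ContinuousLinearMap

open scoped RealInnerProductSpace

lemma orthProj_apply {H : Type*} [NormedAddCommGroup H] [InnerProductSpace ℝ H]
    (K : Submodule ℝ H) [h : HasOrthogonalProjection K] (x : H) :
    orthProj K x = (orthogonalProjection K x : H) := by
  simp [orthProj, dif_pos h]

lemma norm_orthProj_apply_le {H : Type*} [NormedAddCommGroup H] [InnerProductSpace ℝ H]
    (K : Submodule ℝ H) [HasOrthogonalProjection K] (x : H) :
    ‖orthProj K x‖ ≤ ‖x‖ := by
  rw [orthProj_apply]
  exact ((orthogonalProjection K).le_opNorm x).trans <| by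
    simpa using mul_le_mul_of_nonneg_right (orthogonalProjection_norm_le K) (norm_nonneg x)

lemma inner_orthProj_s11 {H : Type*} [NormedAddCommGroup H] [InnerProductSpace ℝ H]
    (K : Submodule ℝ H) [HasOrthogonalProjection K] (x y : H) :
    ⟪orthProj K x, y⟫ = ⟪x, orthProj K y⟫ := by
  rw [orthProj_apply, orthProj_apply]
  exact inner_starProjection_left_eq_right K x y

variable {X Y : Type*} [NormedAddCommGroup X] [InnerProductSpace ℝ X] [CompleteSpace X]
  [NormedAddCommGroup Y] [InnerProductSpace ℝ Y] [CompleteSpace Y]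

/-- Graph convergence: `s-lim G(Tₙ) = w-lim̃ G(Tₙ) = G(T)` in `X × Y`. -/
theorem stmt11
    (T : X →L[ℝ] Y) (Xn : ℕ → Submodule ℝ X)
    (hfin : ∀ n, FiniteDimensional ℝ (Xn n))
    (hinf : ¬ FiniteDimensional ℝ X)
    (hproj : ∀ x : X, Tendsto (fun n => orthProj (Xn n) x) atTop (𝓝 x))
    (Tn : ℕ → X →L[ℝ] Y) (hTn : ∀ n, Tn n = T.comp (orthProj (Xn n))) :
    ({p : X × Y | ∃ u : ℕ → X × Y,
        (∀ n, (u n).2 = (Tn n) (u n).1) ∧ Tendsto u atTop (𝓝 p)}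
      = {p : X × Y | p.2 = T p.1}) ∧
    ({p : X × Y | ∃ u : ℕ → X × Y,
        (∀ n, ∃ k, n ≤ k ∧ (u n).2 = (Tn k) (u n).1) ∧
        ∀ q : X × Y, Tendsto
          (fun n => (inner ℝ (u n).1 q.1 : ℝ) + (inner ℝ (u n).2 q.2 : ℝ)) atTop
          (𝓝 ((inner ℝ p.1 q.1 : ℝ) + (inner ℝ p.2 q.2 : ℝ)))}
      = {p : X × Y | p.2 = T p.1}) := by
  haveI : ∀ n, HasOrthogonalProjection (Xn n) := by
    intro n
    haveI := hfin n
    infer_instance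
  -- key: if xₙ → x strongly, then orthProj (Xn n) xₙ → x
  have key : ∀ (x : X) (v : ℕ → X), Tendsto v atTop (𝓝 x) →
      Tendsto (fun n => orthProj (Xn n) (v n)) atTop (𝓝 x) := by
    intro x v hv
    have h1 : Tendsto (fun n => orthProj (Xn n) (v n) - orthProj (Xn n) x) atTop (𝓝 0) := by
      rw [tendsto_iff_norm_sub_tendsto_zero] at hv
      rw [tendsto_zero_iff_norm_tendsto_zero]
      refine squeeze_zero (fun n => norm_nonneg _) (fun n => ?_) (by simpa using hv)
      simpa [map_sub] using norm_orthProj_apply_le (Xn n) (v n - x)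
    have := h1.add (hproj x)
    simpa using this
  -- the "trivial" inclusion: graph points are strong limits
  have hmem : ∀ p : X × Y, p.2 = T p.1 →
      Tendsto (fun n => ((p.1, (Tn n) p.1) : X × Y)) atTop (𝓝 p) := by
    intro p hp
    rw [Prod.tendsto_iff]
    refine ⟨tendsto_const_nhds, ?_⟩
    have : Tendsto (fun n => T (orthProj (Xn n) p.1)) atTop (𝓝 (T p.1)) :=
      (T.continuous.tendsto _).comp (hproj p.1)
    simp only [hTn, ContinuousLinearMap.comp_apply]
    rw [hp]
    exact this
  constructor
  · ext p
    simp only [Set.mem_setOf_eq]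
    constructor
    · rintro ⟨u, hu, hconv⟩
      rw [Prod.tendsto_iff] at hconv
      have h1 : Tendsto (fun n => (u n).1) atTop (𝓝 p.1) := hconv.1
      have h2 : Tendsto (fun n => (u n).2) atTop (𝓝 p.2) := hconv.2
      have h3 : Tendsto (fun n => T (orthProj (Xn n) (u n).1)) atTop (𝓝 (T p.1)) :=
        (T.continuous.tendsto _).comp (key p.1 _ h1)
      have h4 : Tendsto (fun n => (u n).2) atTop (𝓝 (T p.1)) := by
        refine h3.congr fun n => ?_
        rw [hu n, hTn n]; rfl
      exact tendsto_nhds_unique h2 h4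
    · intro hp
      exact ⟨fun n => (p.1, (Tn n) p.1), fun n => rfl, hmem p hp⟩
  · ext p
    simp only [Set.mem_setOf_eq]
    constructor
    · rintro ⟨u, hu, hconv⟩
      choose k hk hTk using hu
      have hkto : Tendsto k atTop atTop := tendsto_atTop_mono hk tendsto_id
      -- weak convergence of components
      have hw1 : ∀ w : X, Tendsto (fun n => (⟪(u n).1, w⟫ : ℝ)) atTop (𝓝 ⟪p.1, w⟫) := by
        intro w
        have := hconv (w, 0)
        simpa using this
      have hw2 : ∀ w : Y, Tendsto (fun n => (⟪(u n).2, w⟫ : ℝ)) atTop (𝓝 ⟪p.2, w⟫) := by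
        intro w
        have := hconv (0, w)
        simpa using this
      -- boundedness of (u n).1 via Banach–Steinhaus
      obtain ⟨C, hC⟩ : ∃ C, ∀ n, ‖(u n).1‖ ≤ C := by
        have hbs := banach_steinhaus (g := fun n => innerSL ℝ ((u n).1)) (fun w => ?_)
        · obtain ⟨C, hC⟩ := hbs
          exact ⟨C, fun n => by simpa [innerSL_apply_norm] using hC n⟩
        · obtain ⟨C, hC⟩ := (hw1 w).norm.bddAbove_range
          exact ⟨C, fun n => hC ⟨n, rfl⟩⟩
      -- show ⟪(u n).2, w⟫ → ⟪T p.1, w⟫ for every w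
      have hlim : ∀ w : Y, Tendsto (fun n => (⟪(u n).2, w⟫ : ℝ)) atTop (𝓝 ⟪T p.1, w⟫) := by
        intro w
        set v : X := (ContinuousLinearMap.adjoint T) w with hv
        have heq : ∀ n, (⟪(u n).2, w⟫ : ℝ) =
            ⟪(u n).1, v⟫ + ⟪(u n).1, orthProj (Xn (k n)) v - v⟫ := by
          intro n
          have h5 : (u n).2 = T (orthProj (Xn (k n)) (u n).1) := by rw [hTk n, hTn]; rfl
          rw [h5, ← ContinuousLinearMap.adjoint_inner_right, ← hv,
            inner_orthProj_s11, ← inner_add_right, add_sub_cancel]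
        have ht1 : Tendsto (fun n => (⟪(u n).1, v⟫ : ℝ)) atTop (𝓝 ⟪p.1, v⟫) := hw1 v
        have ht2 : Tendsto (fun n => (⟪(u n).1, orthProj (Xn (k n)) v - v⟫ : ℝ)) atTop
            (𝓝 0) := by
          have hz : Tendsto (fun n => ‖orthProj (Xn (k n)) v - v‖) atTop (𝓝 0) := by
            have := (hproj v).comp hkto
            rw [tendsto_iff_norm_sub_tendsto_zero] at this
            exact this
          refine squeeze_zero_norm (fun n => ?_) (by simpa using hz.const_mul C)
          calc ‖(⟪(u n).1, orthProj (Xn (k n)) v - v⟫ : ℝ)‖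
              ≤ ‖(u n).1‖ * ‖orthProj (Xn (k n)) v - v‖ := norm_inner_le_norm _ _
            _ ≤ C * ‖orthProj (Xn (k n)) v - v‖ :=
                mul_le_mul_of_nonneg_right (hC n) (norm_nonneg _)
        have hsum := ht1.add ht2
        rw [add_zero] at hsum
        have h3 : (⟪p.1, v⟫ : ℝ) = ⟪T p.1, w⟫ := by
          rw [hv, ContinuousLinearMap.adjoint_inner_right]
        rw [h3] at hsum
        exact hsum.congr fun n => (heq n).symm
      refine ext_inner_right ℝ fun w => ?_
      exact tendsto_nhds_unique (hw2 w) (hlim w)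
    · intro hp
      refine ⟨fun n => (p.1, (Tn n) p.1), fun n => ⟨n, le_rfl, rfl⟩, fun q => ?_⟩
      have h := hmem p hp
      rw [Prod.tendsto_iff] at h
      exact (Filter.Tendsto.inner h.1 tendsto_const_nhds).add
        (Filter.Tendsto.inner h.2 tendsto_const_nhds)
end
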